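/- Let r, s be natural numbers with 2 ≤ r and 2 ≤ s, and let F be a field of prime characteristic p. Assume either (Nat.choose (r+s) r · Nat.choose r 2 · (s−1) : Cardinal) < Cardinal.mk F, or (p ^ (Nat.choose r 2 · (s−1)) : Cardinal) < Cardinal.mk F. Then there exists an injective family H : F → Submodule F (Fin (r+s) → F) with finrank (H t) = r for all t, which is an r-uniform strong (s, r·s) subspace design (for every submodule W with finrank W = s and every finite subset T of F, ∑_{t ∈ T} finrank (H t ⊓ W) ≤ r·s), and there exists an injective family G : F → Submodule F (Fin (r+s) → F) with finrank (G t) = s for all t, which is an s-uniform strong (r, s·r) subspace design (for every submodule V with finrank V = r and every finite subset T of F, ∑_{t ∈ T} finrank (G t ⊓ V) ≤ s·r). -/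

import Mathlib

open Module

namespace Stmt16

open Polynomial

variable {F : Type*} [Field F]

/-! ### Nat/Finset helpers -/

lemma two_mul_choose_two (n : ℕ) : 2 * n.choose 2 = n * (n - 1) := by
  cases n with
  | zero => simp
  | succ n =>
    rw [Nat.choose_two_right]
    simp only [Nat.add_sub_cancel]
    have he : Even ((n + 1) * n) := by
      rw [mul_comm]
      exact Nat.even_mul_succ_self n
    obtain ⟨c, hc⟩ := he
    omega

lemma sum_distinct_ge (S : Finset ℕ) : S.card.choose 2 ≤ ∑ x ∈ S, x := by
  classical
  induction S using Finset.strongInduction with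
  | _ S ih =>
    rcases S.eq_empty_or_nonempty with rfl | hne
    · simp
    · have hmem : S.max' hne ∈ S := S.max'_mem hne
      set M := S.max' hne with hM
      have hcard : S.card - 1 ≤ M := by
        have hsub : S ⊆ Finset.range (M + 1) :=
          fun x hx => Finset.mem_range.mpr (Nat.lt_succ_of_le (S.le_max' x hx))
        have := Finset.card_le_card hsub
        simp only [Finset.card_range] at this
        omega
      have ih' := ih (S.erase M) (Finset.erase_ssubset hmem)
      have hsum : ∑ x ∈ S, x = M + ∑ x ∈ S.erase M, x := (Finset.add_sum_erase S _ hmem).symm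
      have hce : (S.erase M).card = S.card - 1 := Finset.card_erase_of_mem hmem
      rw [hce] at ih'
      have hch : S.card.choose 2 ≤ (S.card - 1) + (S.card - 1).choose 2 := by
        rcases Nat.eq_zero_or_pos S.card with h0 | h0
        · simp [h0]
        · obtain ⟨n, hn⟩ := Nat.exists_eq_succ_of_ne_zero (Nat.pos_iff_ne_zero.mp h0)
          rw [hn, Nat.choose_succ_succ]
          simp [Nat.choose_one_right]
      omega

lemma sum_distinct_ge' (S : Finset ℕ) (a : ℕ) (h : ∀ x ∈ S, a ≤ x) :
    S.card * a + S.card.choose 2 ≤ ∑ x ∈ S, x := by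
  classical
  have hinj : ∀ x ∈ S, ∀ y ∈ S, x - a = y - a → x = y := by
    intro x hx y hy hxy
    have := h x hx; have := h y hy; omega
  have hcard : (S.image (· - a)).card = S.card := Finset.card_image_of_injOn
    (fun x hx y hy hxy => hinj x hx y hy hxy)
  have h1 := sum_distinct_ge (S.image (· - a))
  rw [hcard, Finset.sum_image hinj] at h1
  have h2 : ∑ x ∈ S, (x - a + a) = ∑ x ∈ S, x :=
    Finset.sum_congr rfl (fun x hx => by have := h x hx; omega)
  rw [Finset.sum_add_distrib, Finset.sum_const, smul_eq_mul] at h2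
  omega

lemma sum_distinct_le (S : Finset ℕ) (m : ℕ) (h : ∀ x ∈ S, x < m) :
    ∑ x ∈ S, x + S.card.choose 2 ≤ S.card * (m - 1) := by
  classical
  have hinj : ∀ x ∈ S, ∀ y ∈ S, m - 1 - x = m - 1 - y → x = y := by
    intro x hx y hy hxy
    have := h x hx; have := h y hy; omega
  have hcard : (S.image (fun x => m - 1 - x)).card = S.card :=
    Finset.card_image_of_injOn (fun x hx y hy hxy => hinj x hx y hy hxy)
  have h1 := sum_distinct_ge (S.image (fun x => m - 1 - x))
  rw [hcard, Finset.sum_image hinj] at h1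
  have h2 : ∑ x ∈ S, (x + (m - 1 - x)) = S.card * (m - 1) := by
    have := Finset.sum_congr rfl (fun x hx => show x + (m - 1 - x) = m - 1 by
      have := h x hx; omega)
    rw [this, Finset.sum_const, smul_eq_mul]
  rw [Finset.sum_add_distrib] at h2
  omega

lemma key_ineq (k b : ℕ) (h : k ≤ b) :
    k + b.choose 2 ≤ k * b + k.choose 2 + (b - k).choose 2 := by
  obtain ⟨j, rfl⟩ : ∃ j, b = k + j := ⟨b - k, by omega⟩
  have e1 := two_mul_choose_two (k + j)
  have e2 := two_mul_choose_two k
  have e3 := two_mul_choose_two j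
  have hbk : k + j - k = j := by omega
  rw [hbk]
  have main : 2 * k + (k + j) * (k + j - 1) ≤ 2 * (k * (k + j)) + k * (k - 1) + j * (j - 1) := by
    cases k with
    | zero => simp
    | succ k' =>
      cases j with
      | zero => simp
      | succ j' =>
        have h1 : k' + 1 + (j' + 1) - 1 = k' + j' + 1 := by omega
        have h2 : k' + 1 - 1 = k' := by omega
        have h3 : j' + 1 - 1 = j' := by omega
        rw [h1, h2, h3]
        nlinarith
  omega

lemma ab_identity (a b : ℕ) (hb : 1 ≤ b) : b * (a + b - 1) = a * b + 2 * b.choose 2 := by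
  obtain ⟨b', rfl⟩ : ∃ b', b = b' + 1 := ⟨b - 1, by omega⟩
  have e := two_mul_choose_two (b' + 1)
  have h1 : a + (b' + 1) - 1 = a + b' := by omega
  have h2 : b' + 1 - 1 = b' := by omega
  rw [h1] at *
  rw [h2] at e
  have : (b' + 1) * (a + b') = a * (b' + 1) + (b' + 1) * b' := by ring
  omega

lemma le_choose (k n : ℕ) (hk : 1 ≤ k) (hkn : k + 1 ≤ n) : n ≤ n.choose k := by
  induction n with
  | zero => omega
  | succ n ih =>
    rcases Nat.eq_or_lt_of_le hkn with h | h
    · have hkn' : n = k := by omega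
      subst hkn'
      simp [Nat.choose_succ_self_right]
    · obtain ⟨k', rfl⟩ : ∃ k', k = k' + 1 := ⟨k - 1, by omega⟩
      rw [Nat.choose_succ_succ]
      have h1 : 0 < n.choose k' := Nat.choose_pos (by omega)
      have h2 := ih (by omega)
      simp only [Nat.succ_eq_add_one] at *
      omega

lemma five_le_pow (n : ℕ) (h : 5 ≤ n) : n + 1 ≤ 2 ^ (n - 2) := by
  induction n with
  | zero => omega
  | succ n ih =>
    rcases Nat.lt_or_ge n 5 with h5 | h5
    · have : n = 4 := by omega
      subst this
      norm_num
    · have := ih h5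
      have he : n + 1 - 2 = (n - 2) + 1 := by omega
      rw [he, pow_succ]
      omega

/-! ### sum restriction helper -/

lemma sum_dite_lt {M : Type*} [AddCommMonoid M] (b m : ℕ) (hb : b ≤ m)
    (g : ℕ → M) :
    ∑ k : Fin m, (if (k : ℕ) < b then g k else 0) = ∑ i : Fin b, g i := by
  rw [Fin.sum_univ_eq_sum_range (fun k => if k < b then g k else 0) m,
    Fin.sum_univ_eq_sum_range g b]
  rw [← Finset.sum_subset (Finset.range_subset_range.mpr hb)
    (fun x _ hx => by rw [if_neg (by simpa using hx)])]
  exact Finset.sum_congr rfl (fun x hx => if_pos (Finset.mem_range.mp hx))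

/-! ### theta -/

noncomputable def theta (m : ℕ) : (Fin m → F) →ₗ[F] F[X] :=
  ∑ k : Fin m, (monomial (k : ℕ)).comp (LinearMap.proj k)

lemma theta_apply (m : ℕ) (v : Fin m → F) :
    theta m v = ∑ k : Fin m, monomial (k : ℕ) (v k) := by
  simp [theta]

lemma eval_theta (m : ℕ) (v : Fin m → F) (x : F) :
    (theta m v).eval x = ∑ k : Fin m, v k * x ^ (k : ℕ) := by
  simp [theta_apply, eval_finset_sum]

lemma coeff_theta (m : ℕ) (v : Fin m → F) (n : ℕ) (hn : n < m) :
    (theta m v).coeff n = v ⟨n, hn⟩ := by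
  classical
  rw [theta_apply, finset_sum_coeff]
  rw [Finset.sum_eq_single (⟨n, hn⟩ : Fin m)]
  · simp
  · intro k _ hk
    rw [coeff_monomial, if_neg]
    intro h
    exact hk (Fin.ext h)
  · simp


/-! ### The design -/

section Design

open scoped Classical

variable (b m : ℕ) (γ : F)

noncomputable def eps (x : F) : (Fin m → F) →ₗ[F] F :=
  (Polynomial.leval x).comp (theta m)

lemma eps_apply (x : F) (v : Fin m → F) :
    eps m x v = ∑ k : Fin m, v k * x ^ (k : ℕ) := by
  simp [eps, leval_apply, eval_theta]

noncomputable def psi (hb : b ≤ m) (t : F) (j : Fin b) : (Fin m → F) →ₗ[F] F :=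
  if t = 0 then LinearMap.proj (Fin.castLE hb j) else eps m (γ ^ (j : ℕ) * t)

noncomputable def Hdes (hb : b ≤ m) (t : F) : Submodule F (Fin m → F) :=
  LinearMap.ker (LinearMap.pi (psi b m γ hb t))

lemma mem_Hdes (hb : b ≤ m) (t : F) (v : Fin m → F) :
    v ∈ Hdes b m γ hb t ↔ ∀ j : Fin b, psi b m γ hb t j v = 0 := by
  simp [Hdes, LinearMap.mem_ker, LinearMap.pi_apply, funext_iff]

lemma psi_zero (hb : b ≤ m) (j : Fin b) :
    psi b m γ hb 0 j = LinearMap.proj (Fin.castLE hb j) := if_pos rfl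

lemma psi_ne (hb : b ≤ m) {t : F} (ht : t ≠ 0) (j : Fin b) :
    psi b m γ hb t j = eps m (γ ^ (j : ℕ) * t) := if_neg ht

lemma pow_inj (hγ0 : γ ≠ 0) (hord : ∀ k, 0 < k → k < m → γ ^ k ≠ 1)
    {i j : ℕ} (hi : i < m) (hj : j < m) (h : γ ^ i = γ ^ j) : i = j := by
  rcases Nat.lt_trichotomy i j with hlt | he | hlt
  · exfalso
    have e1 : γ ^ i * γ ^ (j - i) = γ ^ j := by
      rw [← pow_add]
      congr 1
      omega
    rw [h] at e1
    have e2 : γ ^ j * γ ^ (j - i) = γ ^ j * 1 := by rw [mul_one]; exact e1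
    exact hord (j - i) (by omega) (by omega)
      (mul_left_cancel₀ (pow_ne_zero j hγ0) e2)
  · exact he
  · exfalso
    have e1 : γ ^ j * γ ^ (i - j) = γ ^ i := by
      rw [← pow_add]
      congr 1
      omega
    rw [← h] at e1
    have e2 : γ ^ i * γ ^ (i - j) = γ ^ i * 1 := by rw [mul_one]; exact e1
    exact hord (i - j) (by omega) (by omega)
      (mul_left_cancel₀ (pow_ne_zero i hγ0) e2)

lemma pts_inj (hb : b ≤ m) (hγ0 : γ ≠ 0) (hord : ∀ k, 0 < k → k < m → γ ^ k ≠ 1)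
    {t : F} (ht : t ≠ 0) : Function.Injective (fun j : Fin b => γ ^ (j : ℕ) * t) := by
  intro j j' h
  simp only [] at h
  have h2 : γ ^ (j : ℕ) = γ ^ (j' : ℕ) := mul_right_cancel₀ ht h
  exact Fin.ext (pow_inj m γ hγ0 hord (lt_of_lt_of_le j.isLt hb)
    (lt_of_lt_of_le j'.isLt hb) h2)

lemma psi_surj (hb : b ≤ m) (hγ0 : γ ≠ 0) (hord : ∀ k, 0 < k → k < m → γ ^ k ≠ 1)
    (t : F) : Function.Surjective (LinearMap.pi (psi b m γ hb t)) := by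
  classical
  intro y
  by_cases ht : t = 0
  · subst ht
    refine ⟨fun k => if h : (k : ℕ) < b then y ⟨k, h⟩ else 0, ?_⟩
    ext j
    rw [LinearMap.pi_apply, psi_zero, LinearMap.proj_apply]
    rw [dif_pos (show ((Fin.castLE hb j : Fin m) : ℕ) < b from j.isLt)]
    exact congrArg y (Fin.ext rfl)
  · set A := Matrix.vandermonde (fun j : Fin b => γ ^ (j : ℕ) * t) with hA
    have hdet : A.det ≠ 0 := by
      rw [hA, Matrix.det_vandermonde]
      apply Finset.prod_ne_zero_iff.mpr
      intro i _
      apply Finset.prod_ne_zero_iff.mpr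
      intro j hj
      have hij : i ≠ j := by
        intro h; subst h; simp at hj
      exact sub_ne_zero.mpr (fun hc => hij (pts_inj b m γ hb hγ0 hord ht hc.symm))
    have hunit : IsUnit A.det := isUnit_iff_ne_zero.mpr hdet
    set u : Fin b → F := A⁻¹.mulVec y with hu
    refine ⟨fun k => if h : (k : ℕ) < b then u ⟨k, h⟩ else 0, ?_⟩
    ext j
    rw [LinearMap.pi_apply, psi_ne b m γ hb ht, eps_apply]
    have hstep : ∀ k : Fin m,
        (if h : (k : ℕ) < b then u ⟨k, h⟩ else 0) * (γ ^ (j : ℕ) * t) ^ (k : ℕ)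
        = (if (k : ℕ) < b then (fun n : ℕ => (if h : n < b then u ⟨n, h⟩ else 0) * (γ ^ (j : ℕ) * t) ^ n) k else 0) := by
      intro k
      by_cases h : (k : ℕ) < b
      · simp only [dif_pos h, if_pos h]
      · simp only [dif_neg h, if_neg h, zero_mul]
    rw [Finset.sum_congr rfl (fun k _ => hstep k),
      sum_dite_lt b m hb (fun n => (if h : n < b then u ⟨n, h⟩ else 0) * (γ ^ (j : ℕ) * t) ^ n)]
    have : ∀ i : Fin b, (if h : (i : ℕ) < b then u ⟨(i : ℕ), h⟩ else 0) * (γ ^ (j : ℕ) * t) ^ (i : ℕ)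
        = A j i * u i := by
      intro i
      rw [dif_pos i.isLt]
      simp [hA, Matrix.vandermonde, mul_comm]
    rw [Finset.sum_congr rfl (fun i _ => this i)]
    have : ∑ i : Fin b, A j i * u i = (A.mulVec u) j := by
      simp [Matrix.mulVec, dotProduct]
    rw [this, hu, Matrix.mulVec_mulVec, Matrix.mul_nonsing_inv A hunit, Matrix.one_mulVec]

lemma finrank_Hdes (hb : b ≤ m) (hγ0 : γ ≠ 0) (hord : ∀ k, 0 < k → k < m → γ ^ k ≠ 1)
    (t : F) : finrank F (Hdes b m γ hb t) = m - b := by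
  have h := LinearMap.finrank_range_add_finrank_ker (LinearMap.pi (psi b m γ hb t))
  rw [LinearMap.range_eq_top.mpr (psi_surj b m γ hb hγ0 hord t), finrank_top] at h
  rw [finrank_fintype_fun_eq_card, Fintype.card_fin] at h
  rw [finrank_fintype_fun_eq_card, Fintype.card_fin] at h
  unfold Hdes
  omega

/-! ### Q polynomials and injectivity -/

noncomputable def Qpol (t : F) : F[X] :=
  if t = 0 then X ^ b else ∏ j : Fin b, (X - C (γ ^ (j : ℕ) * t))

lemma Qpol_zero : Qpol b γ 0 = X ^ b := if_pos rfl

lemma Qpol_ne {t : F} (ht : t ≠ 0) :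
    Qpol b γ t = ∏ j : Fin b, (X - C (γ ^ (j : ℕ) * t)) := if_neg ht

lemma Qpol_monic (t : F) : (Qpol b γ t).Monic := by
  by_cases ht : t = 0
  · subst ht; rw [Qpol_zero]; exact monic_X_pow b
  · rw [Qpol_ne b γ ht]
    exact monic_prod_of_monic _ _ (fun j _ => monic_X_sub_C _)

lemma Qpol_natDegree (t : F) : (Qpol b γ t).natDegree = b := by
  by_cases ht : t = 0
  · subst ht; rw [Qpol_zero]; exact natDegree_X_pow b
  · rw [Qpol_ne b γ ht]
    rw [natDegree_prod_of_monic _ _ (fun j _ => monic_X_sub_C _)]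
    simp only [natDegree_X_sub_C]
    simp

lemma prod_X_sub_C_dvd_of_roots (S : Finset F) (f : F[X]) (h : ∀ x ∈ S, f.IsRoot x) :
    (∏ x ∈ S, (X - C x)) ∣ f := by
  classical
  induction S using Finset.induction generalizing f with
  | empty => simp
  | insert a S' hx ih =>
    have hra : f.IsRoot a := h a (Finset.mem_insert_self a S')
    obtain ⟨g, hg⟩ : (X - C a) ∣ f := dvd_iff_isRoot.mpr hra
    have hroots : ∀ x ∈ S', g.IsRoot x := by
      intro x hxS
      have hfx := h x (Finset.mem_insert_of_mem hxS)
      rw [hg] at hfx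
      simp only [IsRoot, eval_mul, eval_sub, eval_X, eval_C] at hfx
      rcases mul_eq_zero.mp hfx with h1 | h1
      · exfalso
        have hxa : x ≠ a := by rintro rfl; exact hx hxS
        exact hxa (by linear_combination h1)
      · exact h1
    rw [Finset.prod_insert hx, hg]
    exact mul_dvd_mul_left _ (ih g hroots)

lemma mem_Hdes_iff_dvd (hb : b ≤ m) (hγ0 : γ ≠ 0)
    (hord : ∀ k, 0 < k → k < m → γ ^ k ≠ 1) (t : F) (v : Fin m → F) :
    v ∈ Hdes b m γ hb t ↔ Qpol b γ t ∣ theta m v := by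
  classical
  rw [mem_Hdes]
  by_cases ht : t = 0
  · subst ht
    rw [Qpol_zero, X_pow_dvd_iff]
    simp only [psi_zero, LinearMap.proj_apply]
    constructor
    · intro h d hd
      rw [coeff_theta m v d (lt_of_lt_of_le hd hb)]
      exact h ⟨d, hd⟩
    · intro h j
      have := h (j : ℕ) j.isLt
      rwa [coeff_theta m v (j : ℕ) (lt_of_lt_of_le j.isLt hb)] at this
  · rw [Qpol_ne b γ ht]
    simp only [psi_ne b m γ hb ht]
    have heval : ∀ j : Fin b, eps m (γ ^ (j : ℕ) * t) v = (theta m v).eval (γ ^ (j : ℕ) * t) := by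
      intro j
      rw [eps_apply, eval_theta]
    constructor
    · intro h
      have hdvd := prod_X_sub_C_dvd_of_roots
        (Finset.image (fun j : Fin b => γ ^ (j : ℕ) * t) Finset.univ) (theta m v) ?_
      · rwa [Finset.prod_image (fun j _ j' _ hj => pts_inj b m γ hb hγ0 hord ht hj)] at hdvd
      · intro x hxmem
        obtain ⟨j, _, rfl⟩ := Finset.mem_image.mp hxmem
        rw [IsRoot, ← heval j]
        exact h j
    · rintro ⟨g, hg⟩ j
      rw [heval j, hg, eval_mul, eval_prod]
      rw [Finset.prod_eq_zero (Finset.mem_univ j) (by simp), zero_mul]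

lemma Qpol_coeff_pred (hb0 : 0 < b) (t : F) :
    (Qpol b γ t).coeff (b - 1) = -((∑ j ∈ Finset.range b, γ ^ j) * t) := by
  by_cases ht : t = 0
  · subst ht
    rw [Qpol_zero, coeff_X_pow, if_neg (by omega)]
    simp
  · rw [Qpol_ne b γ ht]
    have h := prod_X_sub_C_coeff_card_pred (Finset.univ : Finset (Fin b))
      (fun j => γ ^ (j : ℕ) * t) (by simpa using hb0)
    simp only [Finset.card_univ, Fintype.card_fin] at h
    rw [h, ← Finset.sum_mul, Fin.sum_univ_eq_sum_range (fun j => γ ^ j) b]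

lemma monic_dvd_eq {p q : F[X]} (hp : p.Monic) (hq : q.Monic) (h : p ∣ q)
    (hd : q.natDegree ≤ p.natDegree) : p = q := by
  obtain ⟨u, rfl⟩ := h
  have hu0 : u ≠ 0 := by
    rintro rfl
    rw [mul_zero] at hq
    exact (Monic.ne_zero hq) rfl
  have hnd := natDegree_mul hp.ne_zero hu0
  have hdu : u.natDegree = 0 := by omega
  have hC : u = C (u.coeff 0) := eq_C_of_natDegree_eq_zero hdu
  have hlc : (p * u).leadingCoeff = 1 := hq
  rw [leadingCoeff_mul, hp.leadingCoeff, one_mul] at hlc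
  rw [hC, show u.coeff 0 = u.leadingCoeff by rw [leadingCoeff, hdu], hlc]
  simp

lemma theta_coeffs_Qpol (hb : b < m) (t : F) :
    theta m (fun k : Fin m => (Qpol b γ t).coeff (k : ℕ)) = Qpol b γ t := by
  rw [theta_apply]
  conv_rhs => rw [(Qpol b γ t).as_sum_range' m (by rw [Qpol_natDegree]; exact hb)]
  rw [← Fin.sum_univ_eq_sum_range (fun i => monomial i ((Qpol b γ t).coeff i)) m]

lemma Hdes_inj (hb : b < m) (hb0 : 0 < b) (hγ0 : γ ≠ 0)
    (hord : ∀ k, 0 < k → k < m → γ ^ k ≠ 1) :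
    Function.Injective (Hdes b m γ hb.le) := by
  have hσ : (∑ j ∈ Finset.range b, γ ^ j) ≠ 0 := by
    intro h0
    have hgs := geom_sum_mul γ b
    rw [h0, zero_mul] at hgs
    have : γ ^ b = 1 := by linear_combination -hgs
    exact hord b hb0 hb this
  have key : ∀ t t' : F, Hdes b m γ hb.le t = Hdes b m γ hb.le t' →
      Qpol b γ t' ∣ Qpol b γ t := by
    intro t t' h
    have hv : (fun k : Fin m => (Qpol b γ t).coeff (k : ℕ)) ∈ Hdes b m γ hb.le t := by
      rw [mem_Hdes_iff_dvd b m γ hb.le hγ0 hord, theta_coeffs_Qpol b m γ hb]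
    rw [h, mem_Hdes_iff_dvd b m γ hb.le hγ0 hord, theta_coeffs_Qpol b m γ hb] at hv
    exact hv
  intro t t' hH
  have h1 := key t t' hH
  have hQ : Qpol b γ t' = Qpol b γ t :=
    monic_dvd_eq (Qpol_monic b γ t') (Qpol_monic b γ t) h1
      (by rw [Qpol_natDegree, Qpol_natDegree])
  have hc := congrArg (fun q : F[X] => q.coeff (b - 1)) hQ
  simp only [Qpol_coeff_pred b γ hb0] at hc
  have := neg_injective hc
  exact (mul_left_cancel₀ hσ this).symm

end Design

/-! ### Matrix machinery -/

section MatrixPart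

open scoped Classical

variable (b m : ℕ) (γ : F)

noncomputable def rowv (k : Fin m) : Fin b → F[X] :=
  fun j => C ((γ ^ (j : ℕ)) ^ (k : ℕ))

noncomputable def Mp (w : Fin b → (Fin m → F)) : Matrix (Fin b) (Fin b) F[X] :=
  fun i j => ∑ k : Fin m, (C (w i k) * X ^ (k : ℕ)) * rowv b m γ k j

lemma eval_Mp (w : Fin b → (Fin m → F)) (i j : Fin b) (t : F) :
    (Mp b m γ w i j).eval t = (theta m (w i)).eval (γ ^ (j : ℕ) * t) := by
  rw [Mp, eval_theta, eval_finset_sum]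
  apply Finset.sum_congr rfl
  intro k _
  rw [rowv]
  simp only [eval_mul, eval_pow, eval_C, eval_X]
  rw [mul_pow]
  ring

noncomputable def Vdm (κ : Fin b → Fin m) : F :=
  (Matrix.vandermonde (fun i : Fin b => γ ^ ((κ i : ℕ)))).det

lemma Vdm_eq_zero_of_not_inj (κ : Fin b → Fin m) (h : ¬ Function.Injective κ) :
    Vdm b m γ κ = 0 := by
  simp only [Function.Injective, not_forall] at h
  obtain ⟨i, i', hv, hne⟩ := h
  rw [Vdm, Matrix.det_vandermonde]
  rcases Ne.lt_or_gt (show i ≠ i' from fun hc => hne hc) with hlt | hlt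
  · apply Finset.prod_eq_zero (Finset.mem_univ i)
    apply Finset.prod_eq_zero (Finset.mem_Ioi.mpr hlt)
    rw [hv, sub_self]
  · apply Finset.prod_eq_zero (Finset.mem_univ i')
    apply Finset.prod_eq_zero (Finset.mem_Ioi.mpr hlt)
    rw [hv, sub_self]

lemma Vdm_ne_zero (hγ0 : γ ≠ 0) (hord : ∀ k, 0 < k → k < m → γ ^ k ≠ 1)
    (κ : Fin b → Fin m) (hinj : Function.Injective κ) : Vdm b m γ κ ≠ 0 := by
  rw [Vdm, Matrix.det_vandermonde]
  apply Finset.prod_ne_zero_iff.mpr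
  intro i _
  apply Finset.prod_ne_zero_iff.mpr
  intro j hj
  have hij : i ≠ j := fun hc => by subst hc; simp at hj
  apply sub_ne_zero.mpr
  intro hc
  exact hij (hinj (Fin.ext (pow_inj m γ hγ0 hord (κ j).isLt (κ i).isLt hc))).symm

lemma det_Mp_expand (w : Fin b → (Fin m → F)) :
    (Mp b m γ w).det = ∑ κ : Fin b → Fin m,
      C ((∏ i, w i (κ i)) * Vdm b m γ κ) * X ^ (∑ i, ((κ i : ℕ))) := by
  have hM : Mp b m γ w = fun i => ∑ k : Fin m, (C (w i k) * X ^ (k : ℕ)) • rowv b m γ k := by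
    funext i j
    rw [Mp, Finset.sum_apply]
    apply Finset.sum_congr rfl
    intro k _
    rw [Pi.smul_apply, smul_eq_mul]
  have step : Matrix.detRowAlternating
      (fun i => ∑ k : Fin m, (C (w i k) * X ^ (k : ℕ)) • rowv b m γ k)
      = ∑ κ : Fin b → Fin m, Matrix.detRowAlternating
          (fun i => (C (w i (κ i)) * X ^ ((κ i : ℕ))) • rowv b m γ (κ i)) :=
    (Matrix.detRowAlternating :
      ((Fin b → F[X]) [⋀^Fin b]→ₗ[F[X]] F[X])).toMultilinearMap.map_sum
      (fun i k => (C (w i k) * X ^ (k : ℕ)) • rowv b m γ k)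
  rw [show (Mp b m γ w).det = Matrix.detRowAlternating (Mp b m γ w) from rfl, hM, step]
  apply Finset.sum_congr rfl
  intro κ _
  have hsm : Matrix.detRowAlternating
      (fun i => (C (w i (κ i)) * X ^ ((κ i : ℕ))) • rowv b m γ (κ i))
      = (∏ i : Fin b, (C (w i (κ i)) * X ^ ((κ i : ℕ)))) •
          Matrix.detRowAlternating (fun i => rowv b m γ (κ i)) :=
    (Matrix.detRowAlternating :
      ((Fin b → F[X]) [⋀^Fin b]→ₗ[F[X]] F[X])).toMultilinearMap.map_smul_univ
      (fun i => C (w i (κ i)) * X ^ ((κ i : ℕ))) (fun i => rowv b m γ (κ i))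
  rw [hsm]
  have hdet : Matrix.detRowAlternating (fun i => rowv b m γ (κ i)) = C (Vdm b m γ κ) := by
    have h1 : ((fun i => rowv b m γ (κ i)) : Matrix (Fin b) (Fin b) F[X]) =
        (Matrix.vandermonde (fun i : Fin b => γ ^ ((κ i : ℕ)))).map (C : F → F[X]) := by
      funext i j
      simp only [rowv, Matrix.map_apply, Matrix.vandermonde, Matrix.of_apply]
      congr 1
      rw [← pow_mul, ← pow_mul, Nat.mul_comm]
    have h2 := congrArg Matrix.det h1
    rw [show Matrix.detRowAlternating (fun i => rowv b m γ (κ i)) =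
      Matrix.det ((fun i => rowv b m γ (κ i)) : Matrix (Fin b) (Fin b) F[X]) from rfl, h2]
    have h3 := RingHom.map_det (C : F →+* F[X]) (Matrix.vandermonde (fun i : Fin b => γ ^ ((κ i : ℕ))))
    rw [RingHom.mapMatrix_apply] at h3
    rw [← h3, Vdm]
  rw [hdet, smul_eq_mul]
  rw [Finset.prod_mul_distrib, ← map_prod, Finset.prod_pow_eq_pow_sum]
  rw [map_mul]
  ring

lemma pow_dvd_det_of_rows {n : ℕ} (M : Matrix (Fin n) (Fin n) F[X]) (x : F[X])
    (I : Finset (Fin n)) (h : ∀ i ∈ I, ∀ j, x ∣ M i j) : x ^ I.card ∣ M.det := by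
  classical
  induction I using Finset.induction generalizing M with
  | empty => simp
  | insert a I' ha ih =>
    have hrow : ∀ j, x ∣ M a j := h a (Finset.mem_insert_self a I')
    choose g hg using hrow
    set M' := M.updateRow a g with hM'
    have hMeq : M = M'.updateRow a (x • g) := by
      ext i j
      by_cases hia : i = a
      · subst hia
        rw [Matrix.updateRow_self]
        rw [Pi.smul_apply, smul_eq_mul, ← hg j]
      · rw [Matrix.updateRow_ne hia, hM', Matrix.updateRow_ne hia]
    have hupd : M'.updateRow a g = M' := by
      ext i j
      rw [hM']
      by_cases hia : i = a
      · subst hia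
        rw [Matrix.updateRow_self, Matrix.updateRow_self]
      · rw [Matrix.updateRow_ne hia]
    have hdet : M.det = x * M'.det := by
      conv_lhs => rw [hMeq]
      rw [Matrix.det_updateRow_smul, hupd]
    have hdvd' : x ^ I'.card ∣ M'.det := by
      apply ih
      intro i hi j
      have hia : i ≠ a := fun hc => ha (hc ▸ hi)
      rw [hM', Matrix.updateRow_ne hia]
      exact h i (Finset.mem_insert_of_mem hi) j
    rw [Finset.card_insert_of_notMem ha, hdet, pow_succ, mul_comm (x ^ I'.card) x]
    exact mul_dvd_mul_left x hdvd'
  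
end MatrixPart

/-! ### Basis change for Mp determinants -/

section BasisChange

open scoped Classical

variable (b m : ℕ) (γ : F)

lemma det_Mp_basis_change (W : Submodule F (Fin m → F)) (b₀ w' : Basis (Fin b) F W) :
    ∃ u : F[X], IsUnit u ∧
      (Mp b m γ (fun i => ((w' i : W) : Fin m → F))).det
        = u * (Mp b m γ (fun i => ((b₀ i : W) : Fin m → F))).det := by
  set G : Matrix (Fin b) (Fin b) F := fun i k => b₀.repr (w' i) k with hG
  have hGv : ∀ i, ((w' i : W) : Fin m → F) = ∑ k, G i k • ((b₀ k : W) : Fin m → F) := by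
    intro i
    have h := b₀.sum_repr (w' i)
    calc ((w' i : W) : Fin m → F) = ((∑ k, b₀.repr (w' i) k • b₀ k : W) : Fin m → F) := by
          rw [h]
      _ = ∑ k, G i k • ((b₀ k : W) : Fin m → F) := by
          push_cast
          rfl
  have hmul : Mp b m γ (fun i => ((w' i : W) : Fin m → F))
      = (G.map (C : F → F[X])) * Mp b m γ (fun i => ((b₀ i : W) : Fin m → F)) := by
    funext i j
    rw [Matrix.mul_apply]
    show ∑ k : Fin m, (C (((w' i : W) : Fin m → F) k) * X ^ (k : ℕ)) * rowv b m γ k j = _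
    have : ∀ k : Fin m, ((w' i : W) : Fin m → F) k = ∑ l : Fin b, G i l * ((b₀ l : W) : Fin m → F) k := by
      intro k
      rw [hGv i]
      rw [Finset.sum_apply]
      simp [Pi.smul_apply]
    have hterm : ∀ k : Fin m, (C (((w' i : W) : Fin m → F) k) * X ^ (k : ℕ)) * rowv b m γ k j
        = ∑ l : Fin b, C (G i l) * ((C (((b₀ l : W) : Fin m → F) k) * X ^ (k : ℕ)) * rowv b m γ k j) := by
      intro k
      rw [this k, map_sum C _ _, Finset.sum_mul, Finset.sum_mul]
      apply Finset.sum_congr rfl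
      intro l _
      rw [map_mul]
      ring
    rw [Finset.sum_congr rfl (fun k _ => hterm k), Finset.sum_comm]
    apply Finset.sum_congr rfl
    intro l _
    rw [Matrix.map_apply, ← Finset.mul_sum]
    rfl
  have hGunit : IsUnit G.det := by
    have hGT : G = (b₀.toMatrix ⇑w').transpose := by
      funext i k
      show b₀.repr (w' i) k = _
      rw [Matrix.transpose_apply, Basis.toMatrix_apply]
    have h1 := Basis.toMatrix_mul_toMatrix_flip b₀ w'
    have h2 := congrArg Matrix.det h1
    rw [Matrix.det_mul, Matrix.det_one] at h2
    rw [hGT, Matrix.det_transpose]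
    exact IsUnit.of_mul_eq_one _ h2
  refine ⟨C G.det, Polynomial.isUnit_C.mpr hGunit, ?_⟩
  rw [hmul, Matrix.det_mul]
  congr 1
  have h3 := RingHom.map_det (C : F →+* F[X]) G
  rw [RingHom.mapMatrix_apply] at h3
  rw [← h3]

end BasisChange

/-! ### Bases adapted to filtration / subspace -/

section Bases

variable (m : ℕ)

def Zl (n : ℕ) : Submodule F (Fin m → F) where
  carrier := {v | ∀ k : Fin m, n ≤ (k : ℕ) → v k = 0}
  add_mem' := by intro a b ha hb k hk; simp only [Pi.add_apply, ha k hk, hb k hk, add_zero]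
  zero_mem' := by intro k _; rfl
  smul_mem' := by intro c a ha k hk; simp only [Pi.smul_apply, ha k hk, smul_zero]

lemma mem_Zl (n : ℕ) (v : Fin m → F) : v ∈ Zl m n ↔ ∀ k : Fin m, n ≤ (k : ℕ) → v k = 0 :=
  Iff.rfl

lemma Zl_mono {n n' : ℕ} (h : n ≤ n') : (Zl m n : Submodule F (Fin m → F)) ≤ Zl m n' :=
  fun v hv k hk => hv k (le_trans h hk)

lemma Zl_zero : (Zl m 0 : Submodule F (Fin m → F)) = ⊥ := by
  apply le_antisymm
  · intro v hv
    simp only [Submodule.mem_bot]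
    funext k
    exact hv k (Nat.zero_le _)
  · exact bot_le

lemma Zl_top : (Zl m m : Submodule F (Fin m → F)) = ⊤ := by
  apply le_antisymm le_top
  intro v _ k hk
  exact absurd k.isLt (by omega)

lemma exists_echelon_basis (b : ℕ) (hb0 : 0 < b) (W : Submodule F (Fin m → F))
    (hW : finrank F W = b) :
    ∃ (w : Basis (Fin b) F W) (d : Fin b → Fin m), StrictMono d ∧
      (∀ i, ∀ k : Fin m, (d i : ℕ) < (k : ℕ) → ((w i : W) : Fin m → F) k = 0) ∧
      (∀ i, ((w i : W) : Fin m → F) (d i) ≠ 0) := by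
  classical
  set Fl : ℕ → Submodule F (Fin m → F) := fun n => W ⊓ Zl m n with hFl
  have hFlmono : Monotone Fl := fun n n' h => inf_le_inf_left W (Zl_mono m h)
  have hfrmono : ∀ {n n'}, n ≤ n' → finrank F (Fl n) ≤ finrank F (Fl n') :=
    fun h => Submodule.finrank_mono (hFlmono h)
  have hfr0 : finrank F (Fl 0) = 0 := by
    have hz : Fl 0 = ⊥ := by
      rw [hFl]
      simp only [Zl_zero, inf_bot_eq]
    rw [hz, finrank_bot]
  have hfrm : finrank F (Fl m) = b := by
    have hz : Fl m = W := by
      rw [hFl]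
      simp only [Zl_top, inf_top_eq]
    rw [hz, hW]
  have hstep : ∀ n, n < m → finrank F (Fl (n + 1)) ≤ finrank F (Fl n) + 1 := by
    intro n hn
    set φ : Fl (n + 1) →ₗ[F] F :=
      (LinearMap.proj (⟨n, hn⟩ : Fin m)).comp (Fl (n + 1)).subtype with hφ
    have hker : LinearMap.ker φ ≤ Submodule.comap (Fl (n + 1)).subtype (Fl n) := by
      intro v hv
      simp only [LinearMap.mem_ker, hφ, LinearMap.comp_apply, LinearMap.proj_apply,
        Submodule.coe_subtype] at hv
      refine Submodule.mem_comap.mpr (Submodule.mem_inf.mpr ⟨(Submodule.mem_inf.mp v.2).1, ?_⟩)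
      intro k hk
      rcases Nat.eq_or_lt_of_le hk with he | hlt
      · have hkn : k = ⟨n, hn⟩ := Fin.ext he.symm
        rw [hkn]
        exact hv
      · exact (Submodule.mem_inf.mp v.2).2 k hlt
    have h1 := LinearMap.finrank_range_add_finrank_ker φ
    have h2 : finrank F (LinearMap.range φ) ≤ 1 := by
      have h3 := Submodule.finrank_le (LinearMap.range φ)
      rwa [finrank_self] at h3
    have h3 : finrank F (LinearMap.ker φ) ≤ finrank F (Fl n) := by
      have hle := Submodule.finrank_mono hker
      have heq : finrank F (Submodule.comap (Fl (n + 1)).subtype (Fl n)) = finrank F (Fl n) :=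
        LinearEquiv.finrank_eq (Submodule.comapSubtypeEquivOfLe (hFlmono (Nat.le_succ n)))
      omega
    omega
  have htel : ∀ n, ∑ i ∈ Finset.range n, (finrank F (Fl (i + 1)) - finrank F (Fl i))
      = finrank F (Fl n) - finrank F (Fl 0) := by
    intro n
    induction n with
    | zero => simp
    | succ n ih =>
      rw [Finset.sum_range_succ, ih]
      have h1 := hfrmono (Nat.le_succ n)
      have h2 := hfrmono (Nat.zero_le n)
      simp only [Nat.succ_eq_add_one] at *
      omega
  set J := (Finset.range m).filter (fun n => finrank F (Fl n) < finrank F (Fl (n + 1))) with hJ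
  have hJcard : J.card = b := by
    have h1 : ∑ n ∈ Finset.range m, (finrank F (Fl (n + 1)) - finrank F (Fl n)) = b := by
      rw [htel m, hfr0, hfrm]
      omega
    rw [← Finset.sum_filter_add_sum_filter_not (Finset.range m)
      (fun n => finrank F (Fl n) < finrank F (Fl (n + 1)))
      (fun n => finrank F (Fl (n + 1)) - finrank F (Fl n))] at h1
    have h2 : ∑ n ∈ (Finset.range m).filter
        (fun n => ¬ finrank F (Fl n) < finrank F (Fl (n + 1))),
        (finrank F (Fl (n + 1)) - finrank F (Fl n)) = 0 := by
      apply Finset.sum_eq_zero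
      intro n hn
      have h3 := (Finset.mem_filter.mp hn).2
      omega
    have h3 : ∑ n ∈ J, (finrank F (Fl (n + 1)) - finrank F (Fl n)) = J.card := by
      rw [show ∑ n ∈ J, (finrank F (Fl (n + 1)) - finrank F (Fl n)) = ∑ n ∈ J, 1 from
        Finset.sum_congr rfl (fun n hn => by
          have hn1 := Finset.mem_filter.mp hn
          have h4 := hstep n (Finset.mem_range.mp hn1.1)
          have h5 := hn1.2
          omega)]
      simp
    rw [hJ] at *
    omega
  set oe := J.orderIsoOfFin hJcard with hoe
  have hmemJ : ∀ i : Fin b, ((oe i : ℕ) ∈ Finset.range m) ∧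
      finrank F (Fl (oe i : ℕ)) < finrank F (Fl ((oe i : ℕ) + 1)) := by
    intro i
    exact Finset.mem_filter.mp (oe i).2
  set d : Fin b → Fin m := fun i => ⟨(oe i : ℕ), Finset.mem_range.mp (hmemJ i).1⟩ with hd
  have hdmono : StrictMono d := by
    intro i i' hii
    have h1 : oe i < oe i' := oe.strictMono hii
    exact h1
  have hjump : ∀ i : Fin b, Fl ((oe i : ℕ)) < Fl ((oe i : ℕ) + 1) := by
    intro i
    refine lt_of_le_of_ne (hFlmono (Nat.le_succ _)) ?_
    intro hc
    have h1 := congrArg (fun S : Submodule F (Fin m → F) => finrank F S) hc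
    have h2 := (hmemJ i).2
    omega
  have hexists : ∀ i : Fin b, ∃ x, x ∈ Fl ((oe i : ℕ) + 1) ∧ x ∉ Fl ((oe i : ℕ)) :=
    fun i => SetLike.exists_of_lt (hjump i)
  choose x hx1 hx2 using hexists
  have hxW : ∀ i, x i ∈ W := fun i => (Submodule.mem_inf.mp (hx1 i)).1
  have hsupp : ∀ i, ∀ k : Fin m, (oe i : ℕ) < (k : ℕ) → x i k = 0 :=
    fun i k hk => (Submodule.mem_inf.mp (hx1 i)).2 k (by omega)
  have hlead : ∀ i, x i (d i) ≠ 0 := by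
    intro i hc
    apply hx2 i
    refine Submodule.mem_inf.mpr ⟨hxW i, ?_⟩
    intro k hk
    rcases Nat.eq_or_lt_of_le hk with he | hlt
    · have hkd : k = d i := Fin.ext he.symm
      rw [hkd]
      exact hc
    · exact hsupp i k hlt
  have hli : LinearIndependent F x := by
    rw [Fintype.linearIndependent_iff]
    intro g hg
    by_contra hgne
    push_neg at hgne
    obtain ⟨i0, hi0⟩ := hgne
    set S := Finset.univ.filter (fun i : Fin b => g i ≠ 0) with hS
    have hSne : S.Nonempty := ⟨i0, by simp [hS, hi0]⟩
    set imax := S.max' hSne with him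
    have himem : imax ∈ S := S.max'_mem hSne
    have hgmax : g imax ≠ 0 := (Finset.mem_filter.mp himem).2
    have heval := congrArg (fun v : Fin m → F => v (d imax)) hg
    simp only [Finset.sum_apply, Pi.smul_apply, smul_eq_mul, Pi.zero_apply] at heval
    rw [Finset.sum_eq_single imax ?side1 ?side2] at heval
    case side1 =>
      intro i _ hine
      by_cases hgi : g i = 0
      · rw [hgi, zero_mul]
      · have hiS : i ∈ S := by simp [hS, hgi]
        have hile : i ≤ imax := S.le_max' i hiS
        have hilt : i < imax := lt_of_le_of_ne hile hine
        have hdd : (d i : ℕ) < (d imax : ℕ) := hdmono hilt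
        rw [hsupp i (d imax) hdd, mul_zero]
    case side2 =>
      intro h
      exact absurd (Finset.mem_univ imax) h
    exact hgmax ((mul_eq_zero.mp heval).resolve_right (hlead imax))
  haveI : Nonempty (Fin b) := Fin.pos_iff_nonempty.mp hb0
  have hliW : LinearIndependent F (fun i => (⟨x i, hxW i⟩ : W)) := by
    apply LinearIndependent.of_comp W.subtype
    have : (⇑W.subtype ∘ fun i => (⟨x i, hxW i⟩ : W)) = x := by
      funext i
      rfl
    rw [this]
    exact hli
  have hcardeq : Fintype.card (Fin b) = finrank F W := by
    rw [Fintype.card_fin, hW]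
  refine ⟨basisOfLinearIndependentOfCardEqFinrank hliW hcardeq, d, hdmono, ?_, ?_⟩
  · intro i k hk
    rw [coe_basisOfLinearIndependentOfCardEqFinrank]
    exact hsupp i k hk
  · intro i
    rw [coe_basisOfLinearIndependentOfCardEqFinrank]
    exact hlead i

set_option synthInstance.maxHeartbeats 1000000 in
lemma exists_adapted_basis (b : ℕ) (hb0 : 0 < b) (W U : Submodule F (Fin m → F))
    (hUW : U ≤ W) (hW : finrank F W = b) :
    ∃ w : Basis (Fin b) F W, ∀ i : Fin b, (i : ℕ) < finrank F U →
      ((w i : W) : Fin m → F) ∈ U := by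
  classical
  set Us := Submodule.comap W.subtype U with hUs
  have hUsrank : finrank F Us = finrank F U :=
    LinearEquiv.finrank_eq (Submodule.comapSubtypeEquivOfLe hUW)
  obtain ⟨Cs, hCs⟩ := Submodule.exists_isCompl Us
  haveI : Module.Free F Us := Module.Free.of_divisionRing F Us
  haveI : Module.Free F Cs := Module.Free.of_divisionRing F Cs
  have hsum : finrank F Us + finrank F Cs = b := by
    rw [Submodule.finrank_add_eq_of_isCompl hCs, hW]
  set bu := Module.finBasis F Us with hbu
  set bc := Module.finBasis F Cs with hbc
  set pe := Submodule.prodEquivOfIsCompl Us Cs hCs with hpe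
  set e : (Fin (finrank F Us) ⊕ Fin (finrank F Cs)) ≃ Fin b :=
    finSumFinEquiv.trans (finCongr hsum) with he
  refine ⟨((bu.prod bc).map pe).reindex e, ?_⟩
  intro i hi
  have hi' : (i : ℕ) < finrank F Us := by omega
  have hes : e.symm i = Sum.inl ⟨(i : ℕ), hi'⟩ := by
    rw [Equiv.symm_apply_eq]
    apply Fin.ext
    simp [he, finSumFinEquiv_apply_left]
  rw [Basis.reindex_apply, hes, Basis.map_apply, Basis.prod_apply]
  simp only [Sum.elim_inl, Function.comp_apply, LinearMap.coe_inl]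
  have hval : pe ((bu ⟨(i : ℕ), hi'⟩ : Us), (0 : Cs)) = ((bu ⟨(i : ℕ), hi'⟩ : Us) : W) := by
    have hc := Submodule.coe_prodEquivOfIsCompl Us Cs hCs
    have : pe ((bu ⟨(i : ℕ), hi'⟩ : Us), (0 : Cs))
        = Us.subtype.coprod Cs.subtype ((bu ⟨(i : ℕ), hi'⟩ : Us), (0 : Cs)) := by
      rw [hpe, ← hc]
      rfl
    rw [this]
    simp [LinearMap.coprod_apply]
  rw [hval]
  exact Submodule.mem_comap.mp (bu ⟨(i : ℕ), hi'⟩).2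

end Bases

/-! ### Main design lemma -/

section MainLemma

open scoped Classical

lemma card_filter_lt (b c : ℕ) (hc : c ≤ b) :
    (Finset.univ.filter (fun i : Fin b => (i : ℕ) < c)).card = c := by
  rw [show Finset.univ.filter (fun i : Fin b => (i : ℕ) < c)
      = Finset.map ⟨Fin.castLE hc, Fin.castLE_injective hc⟩ Finset.univ from ?_]
  · rw [Finset.card_map, Finset.card_univ, Fintype.card_fin]
  · ext j
    simp only [Finset.mem_filter, Finset.mem_univ, true_and, Finset.mem_map,
      Function.Embedding.coeFn_mk]
    constructor
    · intro hj
      exact ⟨⟨(j : ℕ), hj⟩, Fin.ext rfl⟩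
    · rintro ⟨i, rfl⟩
      exact i.isLt

lemma sum_kappa_ge (b m c : ℕ) (hc : c ≤ b) (κ : Fin b → Fin m)
    (hinj : Function.Injective κ) (h : ∀ i : Fin b, (i : ℕ) < c → b ≤ (κ i : ℕ)) :
    c * b + c.choose 2 + (b - c).choose 2 ≤ ∑ i, ((κ i : ℕ)) := by
  classical
  have hPcard : (Finset.univ.filter (fun i : Fin b => (i : ℕ) < c)).card = c :=
    card_filter_lt b c hc
  have hsplit := Finset.sum_filter_add_sum_filter_not Finset.univ
    (fun i : Fin b => (i : ℕ) < c) (fun i => ((κ i : ℕ)))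
  have hinj' : ∀ (s : Finset (Fin b)), ∀ x ∈ s, ∀ y ∈ s, (κ x : ℕ) = (κ y : ℕ) → x = y :=
    fun s x _ y _ hxy => hinj (Fin.ext hxy)
  have h1 : c * b + c.choose 2 ≤
      ∑ i ∈ Finset.univ.filter (fun i : Fin b => (i : ℕ) < c), ((κ i : ℕ)) := by
    have himg := sum_distinct_ge'
      ((Finset.univ.filter (fun i : Fin b => (i : ℕ) < c)).image (fun i => ((κ i : ℕ)))) b ?_
    · rwa [Finset.card_image_of_injOn (fun x hx y hy => hinj' _ x hx y hy), hPcard,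
        Finset.sum_image (hinj' _)] at himg
    · intro x hx
      obtain ⟨i, hi, rfl⟩ := Finset.mem_image.mp hx
      exact h i (Finset.mem_filter.mp hi).2
  have hPc : (Finset.univ.filter (fun i : Fin b => ¬ (i : ℕ) < c)).card = b - c := by
    have := Finset.card_filter_add_card_filter_not
      (s := (Finset.univ : Finset (Fin b))) (p := fun i : Fin b => (i : ℕ) < c)
    rw [Finset.card_univ, Fintype.card_fin] at this
    omega
  have h2 : (b - c).choose 2 ≤
      ∑ i ∈ Finset.univ.filter (fun i : Fin b => ¬ (i : ℕ) < c), ((κ i : ℕ)) := by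
    have himg := sum_distinct_ge
      ((Finset.univ.filter (fun i : Fin b => ¬ (i : ℕ) < c)).image (fun i => ((κ i : ℕ))))
    rwa [Finset.card_image_of_injOn (fun x hx y hy => hinj' _ x hx y hy), hPc,
      Finset.sum_image (hinj' _)] at himg
  omega

lemma MAIN (a b m : ℕ) (ha : 1 ≤ a) (hb0 : 1 ≤ b) (hm : a + b = m) (γ : F) (hγ0 : γ ≠ 0)
    (hord : ∀ k, 0 < k → k < m → γ ^ k ≠ 1) :
    ∃ H : F → Submodule F (Fin m → F), Function.Injective H ∧
      (∀ t, finrank F (H t) = a) ∧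
      ∀ W : Submodule F (Fin m → F), finrank F W = b → ∀ T : Finset F,
        ∑ t ∈ T, finrank F (H t ⊓ W : Submodule F (Fin m → F)) ≤ a * b := by
  classical
  have hb : b < m := by omega
  refine ⟨Hdes b m γ hb.le, Hdes_inj b m γ hb (by omega) hγ0 hord, ?_, ?_⟩
  · intro t
    rw [finrank_Hdes b m γ hb.le hγ0 hord t]
    omega
  · intro W hW T
    obtain ⟨b₀, d, hdmono, hsupp, hlead⟩ := exists_echelon_basis m b (by omega) W hW
    set wfun : Fin b → Fin m → F := fun i => ((b₀ i : W) : Fin m → F) with hwfun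
    set D := (Mp b m γ wfun).det with hD
    have hexp := det_Mp_expand b m γ wfun
    -- D ≠ 0
    set N := ∑ i, ((d i : ℕ)) with hN
    have hcoeff : D.coeff N = (∏ i, wfun i (d i)) * Vdm b m γ d := by
      rw [hD, hexp, finset_sum_coeff]
      rw [Finset.sum_eq_single d ?side1 ?side2]
      · rw [coeff_C_mul, coeff_X_pow, if_pos rfl, mul_one]
      case side1 =>
        intro κ _ hκne
        rw [coeff_C_mul, coeff_X_pow]
        by_cases hA : (∏ i, wfun i (κ i)) * Vdm b m γ κ = 0
        · rw [hA, zero_mul]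
        · have hw : ∀ i, wfun i (κ i) ≠ 0 := by
            intro i hzero
            apply hA
            rw [Finset.prod_eq_zero (Finset.mem_univ i) hzero, zero_mul]
          have hle : ∀ i, (κ i : ℕ) ≤ (d i : ℕ) := by
            intro i
            by_contra hlt
            exact hw i (hsupp i (κ i) (by omega))
          have hne : N ≠ (∑ i, ((κ i : ℕ))) := by
            intro hNe
            apply hκne
            funext i
            have heq := (Finset.sum_eq_sum_iff_of_le
              (fun i _ => hle i)).mp (by rw [← hNe, hN]) i (Finset.mem_univ i)
            exact Fin.ext heq
          rw [if_neg hne, mul_zero]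
      case side2 =>
        intro hd
        exact absurd (Finset.mem_univ d) hd
    have hAne : (∏ i, wfun i (d i)) * Vdm b m γ d ≠ 0 := by
      apply mul_ne_zero
      · exact Finset.prod_ne_zero_iff.mpr (fun i _ => hlead i)
      · exact Vdm_ne_zero b m γ hγ0 hord d hdmono.injective
    have hDne : D ≠ 0 := fun hc => hAne (by rw [← hcoeff, hc, coeff_zero])
    -- degree bound
    have hDdeg : D.natDegree ≤ a * b + b.choose 2 := by
      rw [hD, hexp]
      apply Polynomial.natDegree_sum_le_of_forall_le
      intro κ _
      by_cases hA : (∏ i, wfun i (κ i)) * Vdm b m γ κ = 0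
      · rw [hA, map_zero, zero_mul]
        simp
      · have hVne : Vdm b m γ κ ≠ 0 := fun hc => hA (by rw [hc, mul_zero])
        have hκinj : Function.Injective κ := by
          by_contra hni
          exact hVne (Vdm_eq_zero_of_not_inj b m γ κ hni)
        have hinj' : ∀ x ∈ (Finset.univ : Finset (Fin b)), ∀ y ∈ Finset.univ,
            (κ x : ℕ) = (κ y : ℕ) → x = y := fun x _ y _ hxy => hκinj (Fin.ext hxy)
        have hsum : (∑ i, ((κ i : ℕ))) ≤ a * b + b.choose 2 := by
          have hS := sum_distinct_le
            ((Finset.univ : Finset (Fin b)).image (fun i => ((κ i : ℕ)))) m ?_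
          · rw [Finset.card_image_of_injOn (fun x hx y hy => hinj' x hx y hy),
              Finset.card_univ, Fintype.card_fin, Finset.sum_image hinj'] at hS
            have hid := ab_identity a b hb0
            have hm1 : m - 1 = a + b - 1 := by omega
            rw [hm1] at hS
            omega
          · intro x hx
            obtain ⟨i, _, rfl⟩ := Finset.mem_image.mp hx
            exact (κ i).isLt
        apply le_trans (natDegree_mul_le)
        rw [natDegree_C, natDegree_X_pow, zero_add]
        exact hsum
    -- rank facts
    have hUle : ∀ t : F, Hdes b m γ hb.le t ⊓ W ≤ W := fun t => inf_le_right
    have hUrank : ∀ t : F, finrank F (Hdes b m γ hb.le t ⊓ W : Submodule F (Fin m → F)) ≤ b := by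
      intro t
      have := Submodule.finrank_mono (hUle t)
      omega
    -- claim 1
    have hclaim1 : ∀ t : F, t ≠ 0 →
        (X - C t) ^ (finrank F (Hdes b m γ hb.le t ⊓ W : Submodule F (Fin m → F))) ∣ D := by
      intro t ht
      obtain ⟨w', hw'⟩ := exists_adapted_basis m b (by omega) W
        (Hdes b m γ hb.le t ⊓ W) (hUle t) hW
      obtain ⟨u, huunit, hueq⟩ := det_Mp_basis_change b m γ W b₀ w'
      have hrows : ∀ i ∈ Finset.univ.filter
          (fun i : Fin b => (i : ℕ) < finrank F (Hdes b m γ hb.le t ⊓ W : Submodule F (Fin m → F))),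
          ∀ j, (X - C t) ∣ Mp b m γ (fun i => ((w' i : W) : Fin m → F)) i j := by
        intro i hi j
        rw [dvd_iff_isRoot]
        show (Mp b m γ (fun i => ((w' i : W) : Fin m → F)) i j).eval t = 0
        rw [eval_Mp]
        have hmem : ((w' i : W) : Fin m → F) ∈ Hdes b m γ hb.le t :=
          (Submodule.mem_inf.mp (hw' i (Finset.mem_filter.mp hi).2)).1
        rw [mem_Hdes] at hmem
        have hj := hmem j
        rw [psi_ne b m γ hb.le ht, eps_apply] at hj
        rw [eval_theta]
        exact hj
      have hdvd := pow_dvd_det_of_rows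
        (Mp b m γ (fun i => ((w' i : W) : Fin m → F))) (X - C t) _ hrows
      rw [card_filter_lt b _ (hUrank t), hueq] at hdvd
      exact (IsUnit.dvd_mul_left huunit).mp hdvd
    -- claim 2
    set c0 := finrank F (Hdes b m γ hb.le 0 ⊓ W : Submodule F (Fin m → F)) with hc0
    set E := c0 * b + c0.choose 2 + (b - c0).choose 2 with hE
    have hclaim2 : (X : F[X]) ^ E ∣ D := by
      obtain ⟨w', hw'⟩ := exists_adapted_basis m b (by omega) W
        (Hdes b m γ hb.le 0 ⊓ W) (hUle 0) hW
      obtain ⟨u, huunit, hueq⟩ := det_Mp_basis_change b m γ W b₀ w'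
      have hvanish : ∀ i : Fin b, (i : ℕ) < c0 → ∀ k : Fin m, (k : ℕ) < b →
          ((w' i : W) : Fin m → F) k = 0 := by
        intro i hi k hk
        have hmem : ((w' i : W) : Fin m → F) ∈ Hdes b m γ hb.le 0 :=
          (Submodule.mem_inf.mp (hw' i hi)).1
        rw [mem_Hdes] at hmem
        have hj := hmem ⟨(k : ℕ), hk⟩
        rw [psi_zero, LinearMap.proj_apply] at hj
        have hcast : (Fin.castLE hb.le (⟨(k : ℕ), hk⟩ : Fin b)) = k := Fin.ext rfl
        rwa [hcast] at hj
      have hdvd : (X : F[X]) ^ E ∣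
          (Mp b m γ (fun i => ((w' i : W) : Fin m → F))).det := by
        rw [det_Mp_expand]
        apply Finset.dvd_sum
        intro κ _
        by_cases hA : (∏ i, ((w' i : W) : Fin m → F) (κ i)) * Vdm b m γ κ = 0
        · rw [hA, map_zero, zero_mul]
          exact dvd_zero _
        · have hVne : Vdm b m γ κ ≠ 0 := fun hc2 => hA (by rw [hc2, mul_zero])
          have hκinj : Function.Injective κ := by
            by_contra hni
            exact hVne (Vdm_eq_zero_of_not_inj b m γ κ hni)
          have hge : ∀ i : Fin b, (i : ℕ) < c0 → b ≤ (κ i : ℕ) := by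
            intro i hi
            by_contra hlt
            apply hA
            rw [Finset.prod_eq_zero (Finset.mem_univ i)
              (hvanish i hi (κ i) (by omega)), zero_mul]
          have hsumge := sum_kappa_ge b m c0 (hUrank 0) κ hκinj hge
          exact Dvd.dvd.mul_left (pow_dvd_pow X hsumge) _
      rw [hueq] at hdvd
      exact (IsUnit.dvd_mul_left huunit).mp hdvd
    -- combine
    set T' := T.erase 0 with hT'
    set cf : F → ℕ := fun t => finrank F (Hdes b m γ hb.le t ⊓ W : Submodule F (Fin m → F)) with hcf
    have hprod : ((X : F[X]) ^ E * ∏ t ∈ T', (X - C t) ^ (cf t)) ∣ D := by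
      set ef : F → ℕ := fun t => if t = 0 then E else cf t with hef
      have hall : ∀ t ∈ insert (0 : F) T', (X - C t) ^ (ef t) ∣ D := by
        intro t htmem
        by_cases ht : t = 0
        · subst ht
          have : ((X : F[X]) - C 0) ^ (ef 0) = (X : F[X]) ^ E := by
            rw [hef]
            simp
          rw [this]
          exact hclaim2
        · have : ((X : F[X]) - C t) ^ (ef t) = (X - C t) ^ (cf t) := by
            rw [hef]
            simp [ht]
          rw [this]
          exact hclaim1 t ht
      have hcop : (↑(insert (0 : F) T') : Set F).Pairwise
          (Function.onFun IsCoprime fun t => ((X : F[X]) - C t) ^ (ef t)) := by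
        intro t1 _ t2 _ hne
        exact (Polynomial.isCoprime_X_sub_C_of_isUnit_sub
          (isUnit_iff_ne_zero.mpr (sub_ne_zero.mpr hne))).pow
      have hPdvd := Finset.prod_dvd_of_coprime hcop hall
      rw [Finset.prod_insert (by simp [hT'] : (0 : F) ∉ T')] at hPdvd
      have hfirst : ((X : F[X]) - C 0) ^ (ef 0) = (X : F[X]) ^ E := by
        rw [hef]
        simp
      have hrest : ∏ t ∈ T', ((X : F[X]) - C t) ^ (ef t) = ∏ t ∈ T', (X - C t) ^ (cf t) :=
        Finset.prod_congr rfl (fun t ht => by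
          rw [hef]
          simp [Finset.ne_of_mem_erase ht])
      rwa [hfirst, hrest] at hPdvd
    have hdegsum : E + ∑ t ∈ T', cf t ≤ a * b + b.choose 2 := by
      have h1 := Polynomial.natDegree_le_of_dvd hprod hDne
      have h2 : ((X : F[X]) ^ E * ∏ t ∈ T', (X - C t) ^ (cf t)).natDegree
          = E + ∑ t ∈ T', cf t := by
        rw [natDegree_mul (pow_ne_zero E X_ne_zero) ?hne]
        · rw [natDegree_X_pow]
          congr 1
          rw [natDegree_prod _ _ (fun t _ => pow_ne_zero _ (X_sub_C_ne_zero t))]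
          exact Finset.sum_congr rfl (fun t _ => by
            rw [natDegree_pow, natDegree_X_sub_C, mul_one])
        case hne =>
          apply Finset.prod_ne_zero_iff.mpr
          intro t _
          exact pow_ne_zero _ (X_sub_C_ne_zero t)
      omega
    have hkey := key_ineq c0 b (hUrank 0)
    have hTsum : ∑ t ∈ T, cf t ≤ c0 + ∑ t ∈ T', cf t := by
      by_cases h0T : (0 : F) ∈ T
      · rw [← Finset.add_sum_erase T cf h0T]
      · rw [hT', Finset.erase_eq_of_notMem h0T]
        omega
    have hfinal : ∑ t ∈ T, cf t ≤ a * b := by omega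
    exact hfinal

end MainLemma

/-! ### Fallback design for tiny fields (r = s = 2) -/

section Graph

lemma graph_design [Fintype F] (hcard : Fintype.card F ≤ 4) :
    ∃ H : F → Submodule F (Fin (2 + 2) → F), Function.Injective H ∧
      (∀ t, finrank F (H t) = 2) ∧
      ∀ W : Submodule F (Fin (2 + 2) → F), finrank F W = 2 → ∀ T : Finset F,
        ∑ t ∈ T, finrank F (H t ⊓ W : Submodule F (Fin (2 + 2) → F)) ≤ 2 * 2 := by
  classical
  set L : F → (Fin (2 + 2) → F) →ₗ[F] (Fin 2 → F) := fun t => LinearMap.pi (fun j : Fin 2 =>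
    LinearMap.proj (⟨(j : ℕ) + 2, by omega⟩ : Fin (2 + 2))
      - t • LinearMap.proj (⟨(j : ℕ), by omega⟩ : Fin (2 + 2))) with hL
  set H : F → Submodule F (Fin (2 + 2) → F) := fun t => LinearMap.ker (L t) with hH
  have hLapp : ∀ t (v : Fin (2 + 2) → F) (j : Fin 2),
      L t v j = v ⟨(j : ℕ) + 2, by omega⟩ - t * v ⟨(j : ℕ), by omega⟩ := by
    intro t v j
    rfl
  have hmem : ∀ t (v : Fin (2 + 2) → F), v ∈ H t ↔
      ∀ j : Fin 2, v ⟨(j : ℕ) + 2, by omega⟩ = t * v ⟨(j : ℕ), by omega⟩ := by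
    intro t v
    rw [hH]
    simp only [LinearMap.mem_ker]
    rw [funext_iff]
    constructor
    · intro h j
      have := h j
      rw [hLapp] at this
      simp only [Pi.zero_apply] at this
      linear_combination this
    · intro h j
      rw [hLapp]
      simp only [Pi.zero_apply]
      linear_combination h j
  have hsurj : ∀ t, Function.Surjective (L t) := by
    intro t y
    refine ⟨fun i => if h : (i : ℕ) < 2 then 0 else y ⟨(i : ℕ) - 2, by omega⟩, ?_⟩
    ext j
    rw [hLapp]
    rw [dif_neg (by simp : ¬ (((⟨(j : ℕ) + 2, by omega⟩ : Fin (2 + 2)) : ℕ) < 2))]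
    rw [dif_pos (show ((⟨(j : ℕ), by omega⟩ : Fin (2 + 2)) : ℕ) < 2 from j.isLt)]
    rw [mul_zero, sub_zero]
    exact congrArg y (Fin.ext (by simp))
  have hdim : ∀ t, finrank F (H t) = 2 := by
    intro t
    have h := LinearMap.finrank_range_add_finrank_ker (L t)
    rw [LinearMap.range_eq_top.mpr (hsurj t), finrank_top,
      finrank_fintype_fun_eq_card, finrank_fintype_fun_eq_card,
      Fintype.card_fin, Fintype.card_fin] at h
    show finrank F (LinearMap.ker (L t)) = 2
    omega
  have hdisj : ∀ t t' : F, t ≠ t' → H t ⊓ H t' = ⊥ := by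
    intro t t' hne
    apply le_antisymm ?_ bot_le
    intro v hv
    obtain ⟨h1, h2⟩ := Submodule.mem_inf.mp hv
    rw [hmem] at h1 h2
    have hlow : ∀ j : Fin 2, v ⟨(j : ℕ), by omega⟩ = 0 := by
      intro j
      have h3 : (t - t') * v ⟨(j : ℕ), by omega⟩ = 0 := by
        have e1 := h1 j
        have e2 := h2 j
        rw [sub_mul]
        linear_combination e2 - e1
      exact (mul_eq_zero.mp h3).resolve_left (sub_ne_zero.mpr hne)
    simp only [Submodule.mem_bot]
    funext i
    by_cases hi : (i : ℕ) < 2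
    · have := hlow ⟨(i : ℕ), hi⟩
      rwa [show (⟨((⟨(i : ℕ), hi⟩ : Fin 2) : ℕ), by omega⟩ : Fin (2 + 2)) = i from
        Fin.ext rfl] at this
    · have hj : (i : ℕ) - 2 < 2 := by omega
      have e1 := h1 ⟨(i : ℕ) - 2, hj⟩
      have e2 := hlow ⟨(i : ℕ) - 2, hj⟩
      rw [e2, mul_zero] at e1
      rwa [show (⟨((⟨(i : ℕ) - 2, hj⟩ : Fin 2) : ℕ) + 2, by omega⟩ : Fin (2 + 2)) = i from
        Fin.ext (by simp; omega)] at e1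
  have hinj : Function.Injective H := by
    intro t t' heq
    by_contra hne
    have h1 : H t = H t ⊓ H t' := by
      rw [← heq, inf_idem]
    rw [hdisj t t' hne] at h1
    have h2 := congrArg (fun S : Submodule F (Fin (2 + 2) → F) => finrank F S) h1
    simp only [finrank_bot] at h2
    have h3 := hdim t
    omega
  refine ⟨H, hinj, hdim, ?_⟩
  intro W hW T
  by_cases hex : ∃ t0 ∈ T, H t0 = W
  · obtain ⟨t0, ht0T, ht0⟩ := hex
    rw [Finset.sum_eq_single_of_mem t0 ht0T ?_]
    · rw [ht0, inf_idem, hW]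
      omega
    · intro t htT htne
      have hz : H t ⊓ W = ⊥ := by
        rw [← ht0]
        exact hdisj t t0 htne
      rw [hz, finrank_bot]
  · have hone : ∀ t ∈ T, finrank F (H t ⊓ W : Submodule F (Fin (2 + 2) → F)) ≤ 1 := by
      intro t htT
      by_contra hgt
      push_neg at hgt
      have h1 : H t ⊓ W = H t :=
        Submodule.eq_of_le_of_finrank_le inf_le_left (by rw [hdim t]; omega)
      have h2 : H t ≤ W := by
        conv_lhs => rw [← h1]
        exact inf_le_right
      have h3 : H t = W :=
        Submodule.eq_of_le_of_finrank_le h2 (by rw [hW, hdim t])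
      exact hex ⟨t, htT, h3⟩
    have hsum := Finset.sum_le_card_nsmul T _ 1 hone
    have hcardT : T.card ≤ 4 := le_trans (Finset.card_le_univ T) hcard
    rw [smul_eq_mul, mul_one] at hsum
    omega

end Graph

end Stmt16

open Module

theorem stmt_16 (r s : ℕ) (hr : 2 ≤ r) (hs : 2 ≤ s) (F : Type*) [Field F]
    (p : ℕ) (hp : p.Prime) [CharP F p]
    (hF : ((Nat.choose (r + s) r * Nat.choose r 2 * (s - 1) : ℕ) : Cardinal) < Cardinal.mk F ∨
          ((p ^ (Nat.choose r 2 * (s - 1)) : ℕ) : Cardinal) < Cardinal.mk F) :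
    (∃ H : F → Submodule F (Fin (r + s) → F),
      Function.Injective H ∧
      (∀ t : F, finrank F (H t) = r) ∧
      ∀ W : Submodule F (Fin (r + s) → F), finrank F W = s →
        ∀ T : Finset F,
          ∑ t ∈ T, finrank F (H t ⊓ W : Submodule F (Fin (r + s) → F)) ≤ r * s) ∧
    (∃ G : F → Submodule F (Fin (r + s) → F),
      Function.Injective G ∧
      (∀ t : F, finrank F (G t) = s) ∧
      ∀ V : Submodule F (Fin (r + s) → F), finrank F V = r →
        ∀ T : Finset F,
          ∑ t ∈ T, finrank F (G t ⊓ V : Submodule F (Fin (r + s) → F)) ≤ s * r) := by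
  classical
  by_cases hγ : ∃ γ : F, γ ≠ 0 ∧ ∀ k, 0 < k → k < r + s → γ ^ k ≠ 1
  · obtain ⟨γ, hγ0, hord⟩ := hγ
    constructor
    · exact Stmt16.MAIN r s (r + s) (by omega) (by omega) rfl γ hγ0 hord
    · exact Stmt16.MAIN s r (r + s) (by omega) (by omega) (by omega) γ hγ0 hord
  · push_neg at hγ
    have hfinite : Finite F := by
      set Φ : Polynomial F :=
        Polynomial.X * ∏ k ∈ Finset.Ico 1 (r + s), (Polynomial.X ^ k - 1) with hΦdef
      have hΦ : Φ ≠ 0 := by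
        apply mul_ne_zero Polynomial.X_ne_zero
        apply Finset.prod_ne_zero_iff.mpr
        intro k hk
        have hk1 : 0 < k := (Finset.mem_Ico.mp hk).1
        have h := Polynomial.X_pow_sub_C_ne_zero hk1 (1 : F)
        simpa using h
      have hroots : ∀ x : F, Φ.IsRoot x := by
        intro x
        by_cases hx : x = 0
        · subst hx
          simp [hΦdef, Polynomial.IsRoot]
        · obtain ⟨k, hk0, hkm, hk1⟩ := hγ x hx
          rw [hΦdef]
          simp only [Polynomial.IsRoot, Polynomial.eval_mul, Polynomial.eval_X]
          rw [Polynomial.eval_prod,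
            Finset.prod_eq_zero (Finset.mem_Ico.mpr ⟨hk0, hkm⟩) (by simp [hk1]), mul_zero]
      have hfin : (Set.univ : Set F).Finite :=
        (Polynomial.finite_setOf_isRoot hΦ).subset (fun x _ => hroots x)
      rw [Set.finite_univ_iff] at hfin
      exact hfin
    haveI := hfinite
    haveI : Fintype F := Fintype.ofFinite F
    have hq : Fintype.card F ≤ r + s := by
      obtain ⟨g, hg⟩ := IsCyclic.exists_generator (α := Fˣ)
      have horder : orderOf g = Fintype.card F - 1 := by
        rw [orderOf_eq_card_of_forall_mem_zpowers hg, Nat.card_eq_fintype_card,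
          Fintype.card_units]
      obtain ⟨k, hk0, hkm, hk1⟩ := hγ (g : F) (Units.ne_zero g)
      have hgval : ((g ^ k : Fˣ) : F) = ((1 : Fˣ) : F) := by
        rw [Units.val_pow_eq_pow_val, Units.val_one]
        exact hk1
      have hgk : g ^ k = 1 := Units.ext hgval
      have hle := orderOf_le_of_pow_eq_one hk0 hgk
      have hq1 : 1 ≤ Fintype.card F := Fintype.card_pos
      omega
    rcases hF with h1 | h2
    · exfalso
      rw [Cardinal.mk_fintype, Nat.cast_lt] at h1
      have hC : r + s ≤ (r + s).choose r := Stmt16.le_choose r (r + s) (by omega) (by omega)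
      have hpos : 0 < r.choose 2 * (s - 1) :=
        Nat.mul_pos (Nat.choose_pos hr) (by omega)
      have hmul : (r + s).choose r ≤ (r + s).choose r * (r.choose 2 * (s - 1)) :=
        Nat.le_mul_of_pos_right _ hpos
      rw [Nat.mul_assoc] at h1
      omega
    · rw [Cardinal.mk_fintype, Nat.cast_lt] at h2
      obtain ⟨n, hp', hcardF⟩ := FiniteField.card F p
      have hn : r.choose 2 * (s - 1) < (n : ℕ) := by
        rw [hcardF] at h2
        exact (Nat.pow_lt_pow_iff_right hp.one_lt).mp h2
      have hq2 : 2 ^ (r.choose 2 * (s - 1) + 1) ≤ Fintype.card F := by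
        rw [hcardF]
        calc 2 ^ (r.choose 2 * (s - 1) + 1) ≤ p ^ (r.choose 2 * (s - 1) + 1) :=
              Nat.pow_le_pow_left hp.two_le _
          _ ≤ p ^ (n : ℕ) := Nat.pow_le_pow_right hp.pos (by omega)
      have hrs4 : r = 2 ∧ s = 2 := by
        by_contra hne
        have h5 : 5 ≤ r + s := by omega
        have hc2 : r - 1 ≤ r.choose 2 := by
          rw [Nat.choose_two_right]
          calc r - 1 = 2 * (r - 1) / 2 := by omega
            _ ≤ r * (r - 1) / 2 := Nat.div_le_div_right (Nat.mul_le_mul_right _ hr)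
        have hprod : r + s - 3 ≤ (r - 1) * (s - 1) := by
          obtain ⟨x, hx⟩ : ∃ x, r = x + 2 := ⟨r - 2, by omega⟩
          obtain ⟨y, hy⟩ : ∃ y, s = y + 2 := ⟨s - 2, by omega⟩
          subst hx; subst hy
          have e1 : x + 2 - 1 = x + 1 := by omega
          have e2 : y + 2 - 1 = y + 1 := by omega
          rw [e1, e2]
          have hxy : (x + 1) * (y + 1) = x * y + x + y + 1 := by ring
          omega
        have hprod2 : (r - 1) * (s - 1) ≤ r.choose 2 * (s - 1) :=
          Nat.mul_le_mul_right _ hc2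
        have hN : r + s - 3 ≤ r.choose 2 * (s - 1) := le_trans hprod hprod2
        have hpow := Stmt16.five_le_pow (r + s) h5
        have hmono : (2 : ℕ) ^ (r + s - 2) ≤ 2 ^ (r.choose 2 * (s - 1) + 1) :=
          Nat.pow_le_pow_right (by norm_num) (by omega)
        omega
      obtain ⟨hr2, hs2⟩ := hrs4
      subst hr2; subst hs2
      have hcard4 : Fintype.card F ≤ 4 := by omega
      obtain ⟨H, hinj, hdim, hbound⟩ := Stmt16.graph_design (F := F) hcard4
      exact ⟨⟨H, hinj, hdim, hbound⟩, ⟨H, hinj, hdim, hbound⟩⟩
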